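/- Let n ≥ 2 be a natural number, p any prime, s a nonnegative integer, and d ≥ 1 a natural number such that for every prime q dividing d there exists a natural number k ≥ 1 with q^k ≥ 3 and φ(q^k) ∣ 2n. Then the equation x_1^(2n) + x_2^(2n) = (p^s · d)^(2n) has no solution in positive integers x_1, x_2. In particular, for n ≥ 2 and nonnegative integers s_1, s_2, s, the equation x_1^(2n) + x_2^(2n) = (2^(s_1) · 3^(s_2) · p^s)^(2n) has no solution in positive integers. -/

import Mathlib

private lemma sum_eval {R : Type*} [CommRing R] (X : R) (r : ℕ) :
    ∑ i ∈ Finset.range r, X ^ i * X ^ (r - 1 - i) = (r : R) * X ^ (r - 1) := by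
  have h : ∀ i ∈ Finset.range r, X ^ i * X ^ (r - 1 - i) = X ^ (r - 1) := by
    intro i hi
    rw [Finset.mem_range] at hi
    rw [← pow_add]
    congr 1
    omega
  rw [Finset.sum_congr rfl h, Finset.sum_const, Finset.card_range, nsmul_eq_mul]

private lemma core (n p s x y : ℕ) (hn : 2 ≤ n) (hp : p.Prime) (hs : 1 ≤ s)
    (hx : 0 < x) (hy : 0 < y) (hpx : ¬ p ∣ x) (hpy : ¬ p ∣ y)
    (heq : x ^ (2 * n) + y ^ (2 * n) = (p ^ s) ^ (2 * n)) : False := by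
  by_cases hodd : ∃ r, r.Prime ∧ r ∣ n ∧ r ≠ 2
  · obtain ⟨r, hr, hrn, hr2⟩ := hodd
    have hrodd : Odd r := hr.odd_of_ne_two hr2
    have hr3 : 3 ≤ r := by have := hr.two_le; omega
    have hrdvd : r ∣ 2 * n := hrn.mul_left 2
    set X := x ^ (2 * n / r) with hXdef
    set Y := y ^ (2 * n / r) with hYdef
    have hXr : X ^ r = x ^ (2 * n) := by rw [hXdef, ← pow_mul, Nat.div_mul_cancel hrdvd]
    have hYr : Y ^ r = y ^ (2 * n) := by rw [hYdef, ← pow_mul, Nat.div_mul_cancel hrdvd]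
    set M := s * (2 * n) with hMdef
    have hRHS : (p ^ s) ^ (2 * n) = p ^ M := (pow_mul p s (2 * n)).symm
    have hM : 2 * n ≤ M := Nat.le_mul_of_pos_left (2 * n) hs
    have heq' : X ^ r + Y ^ r = p ^ M := by rw [hXr, hYr, heq, hRHS]
    have hpX : ¬ p ∣ X := fun h => hpx (hp.dvd_of_dvd_pow h)
    have hpY : ¬ p ∣ Y := fun h => hpy (hp.dvd_of_dvd_pow h)
    have hX1 : 1 ≤ X := Nat.one_le_iff_ne_zero.mpr (pow_ne_zero _ hx.ne')
    have hY1 : 1 ≤ Y := Nat.one_le_iff_ne_zero.mpr (pow_ne_zero _ hy.ne')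
    set S : ℤ := ∑ i ∈ Finset.range r, (X : ℤ) ^ i * (-(Y : ℤ)) ^ (r - 1 - i) with hSdef
    have hidentity : S * ((X : ℤ) + (Y : ℤ)) = (X : ℤ) ^ r + (Y : ℤ) ^ r := by
      have h := geom_sum₂_mul (X : ℤ) (-(Y : ℤ)) r
      rw [hrodd.neg_pow] at h
      rw [hSdef]
      simpa [sub_neg_eq_add] using h
    have heqZ : (X : ℤ) ^ r + (Y : ℤ) ^ r = (p : ℤ) ^ M := by exact_mod_cast heq'
    have hdvdXY : (X + Y) ∣ p ^ M := by
      have h : ((X : ℤ) + (Y : ℤ)) ∣ (p : ℤ) ^ M :=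
        Dvd.intro_left S (hidentity.trans heqZ)
      have h2 : ((X + Y : ℕ) : ℤ) ∣ ((p ^ M : ℕ) : ℤ) := by push_cast; exact h
      exact_mod_cast h2
    obtain ⟨b, hbM, hXYb⟩ := (Nat.dvd_prime_pow hp).mp hdvdXY
    have hb1 : 1 ≤ b := by
      rcases Nat.eq_zero_or_pos b with hb0 | hb0
      · rw [hb0, pow_zero] at hXYb; omega
      · exact hb0
    have hSval : S = (p : ℤ) ^ (M - b) := by
      have h1 : S * (p : ℤ) ^ b = (p : ℤ) ^ (M - b) * (p : ℤ) ^ b := by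
        rw [← pow_add]
        have : M - b + b = M := by omega
        rw [this]
        have hcast : (X : ℤ) + (Y : ℤ) = (p : ℤ) ^ b := by exact_mod_cast hXYb
        rw [← hcast, hidentity, heqZ]
      exact mul_right_cancel₀ (pow_ne_zero _ (by exact_mod_cast hp.pos.ne')) h1
    have key : ∀ m : ℕ, 1 < m → m ∣ X + Y →
        ((p : ZMod m)) ^ (M - b) = (r : ZMod m) * (X : ZMod m) ^ (r - 1) := by
      intro m hm hmd
      haveI : NeZero m := ⟨by omega⟩
      have hY' : (Y : ZMod m) = -(X : ZMod m) := by
        have h0 : ((X + Y : ℕ) : ZMod m) = 0 := (ZMod.natCast_eq_zero_iff _ _).mpr hmd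
        push_cast at h0
        linear_combination h0
      calc ((p : ZMod m)) ^ (M - b) = ((S : ℤ) : ZMod m) := by rw [hSval]; push_cast; ring
        _ = ∑ i ∈ Finset.range r, (X : ZMod m) ^ i * (-(Y : ZMod m)) ^ (r - 1 - i) := by
            rw [hSdef]; push_cast; ring
        _ = ∑ i ∈ Finset.range r, (X : ZMod m) ^ i * (X : ZMod m) ^ (r - 1 - i) := by
            rw [hY', neg_neg]
        _ = (r : ZMod m) * (X : ZMod m) ^ (r - 1) := sum_eval _ r
    by_cases hrp : r = p
    · -- r = p case
      subst hrp
      have hrn' : r ≤ n := Nat.le_of_dvd (by omega) hrn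
      have hMp : 2 * r ≤ M := le_trans (by omega) hM
      haveI : Fact r.Prime := ⟨hr⟩
      have hc1 : 1 ≤ M - b := by
        by_contra h
        have hb : M = b := by omega
        have hk := key r hr.one_lt (hXYb ▸ dvd_pow_self r (by omega : b ≠ 0))
        rw [hb, Nat.sub_self, pow_zero, ZMod.natCast_self, zero_mul] at hk
        exact one_ne_zero hk
      rcases Nat.lt_or_ge b 2 with hb2 | hb2
      · -- b = 1 : X + Y = r, sizes too small
        have hbeq : b = 1 := by omega
        rw [hbeq, pow_one] at hXYb
        have hXlt : X < r := by omega
        have hYlt : Y < r := by omega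
        have h1 : X ^ r < r ^ r := Nat.pow_lt_pow_left hXlt (by omega)
        have h2 : Y ^ r < r ^ r := Nat.pow_lt_pow_left hYlt (by omega)
        have h3 : r ^ M < r ^ (r + 1) := by
          rw [pow_succ]
          have : r ^ r * 2 ≤ r ^ r * r := Nat.mul_le_mul_left _ (by omega)
          omega
        have h4 : M < r + 1 := (Nat.pow_lt_pow_iff_right hr.one_lt).mp h3
        omega
      · -- b ≥ 2 : use mod r² to get M - b = 1
        have hc2 : M - b = 1 := by
          by_contra h
          have hge : 2 ≤ M - b := by omega
          have hm2 : r ^ 2 ∣ X + Y := hXYb ▸ pow_dvd_pow r hb2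
          have hr21 : 1 < r ^ 2 := by
            have : r * r ≥ 3 * 3 := Nat.mul_le_mul hr3 hr3
            rw [sq]; omega
          have hk := key (r ^ 2) hr21 hm2
          have hz : ((r : ZMod (r ^ 2))) ^ (M - b) = 0 := by
            haveI : NeZero (r ^ 2) := ⟨by positivity⟩
            have hzz : ((r ^ (M - b) : ℕ) : ZMod (r ^ 2)) = 0 :=
              (ZMod.natCast_eq_zero_iff _ _).mpr (pow_dvd_pow r hge)
            push_cast at hzz
            exact hzz
          rw [hz] at hk
          haveI : NeZero (r ^ 2) := ⟨by positivity⟩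
          have hcast : ((r * X ^ (r - 1) : ℕ) : ZMod (r ^ 2)) = 0 := by
            push_cast
            exact hk.symm
          have hdd : r ^ 2 ∣ r * X ^ (r - 1) :=
            (ZMod.natCast_eq_zero_iff _ _).mp hcast
          have hdX : r ∣ X ^ (r - 1) := by
            obtain ⟨t, ht⟩ := hdd
            have : X ^ (r - 1) = r * t := by
              have hr0 : 0 < r := hr.pos
              have h2 : r * X ^ (r - 1) = r * (r * t) := by rw [ht]; ring
              exact Nat.eq_of_mul_eq_mul_left hr0 h2
            exact ⟨t, this⟩
          exact hpX (hr.dvd_of_dvd_pow hdX)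
        have hMb : M = b + 1 := by omega
        -- size bound : (X+Y)^r ≤ 2^r (X^r + Y^r)
        have h2m : X + Y ≤ 2 * max X Y := by
          rcases le_total X Y with h | h
          · rw [max_eq_right h]; omega
          · rw [max_eq_left h]; omega
        have hmr : max X Y ^ r ≤ X ^ r + Y ^ r := by
          rcases le_total X Y with h | h
          · rw [max_eq_right h]; omega
          · rw [max_eq_left h]; omega
        have hbound : r ^ (b * r) ≤ r ^ (r + M) := by
          calc r ^ (b * r) = (r ^ b) ^ r := by rw [pow_mul]
            _ = (X + Y) ^ r := by rw [hXYb]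
            _ ≤ (2 * max X Y) ^ r := Nat.pow_le_pow_left h2m r
            _ = 2 ^ r * max X Y ^ r := by rw [mul_pow]
            _ ≤ 2 ^ r * (X ^ r + Y ^ r) := Nat.mul_le_mul_left _ hmr
            _ ≤ r ^ r * (X ^ r + Y ^ r) := Nat.mul_le_mul_right _ (Nat.pow_le_pow_left (by omega) r)
            _ = r ^ r * r ^ M := by rw [heq']
            _ = r ^ (r + M) := by rw [pow_add]
        have hle : b * r ≤ r + M := (Nat.pow_le_pow_iff_right hr.one_lt).mp hbound
        have h3b : b * 3 ≤ b * r := Nat.mul_le_mul_left b hr3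
        omega
    · -- r ≠ p case
      have hpr : ¬ p ∣ r := fun h => hrp ((Nat.prime_dvd_prime_iff_eq hp hr).mp h).symm
      haveI : Fact p.Prime := ⟨hp⟩
      have hk := key p hp.one_lt (hXYb ▸ dvd_pow_self p (by omega : b ≠ 0))
      have hR : (r : ZMod p) * (X : ZMod p) ^ (r - 1) ≠ 0 := by
        apply mul_ne_zero
        · simpa [Ne, ZMod.natCast_eq_zero_iff] using hpr
        · apply pow_ne_zero
          simpa [Ne, ZMod.natCast_eq_zero_iff] using hpX
      have hMb0 : M - b = 0 := by
        by_contra h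
        rw [ZMod.natCast_self, zero_pow h] at hk
        exact hR hk.symm
      have hMeq : M = b := by omega
      have hsum : X + Y = X ^ r + Y ^ r := by rw [hXYb, heq', hMeq]
      have hXle : X ≤ X ^ r := Nat.le_self_pow (by omega) X
      have hYle : Y ≤ Y ^ r := Nat.le_self_pow (by omega) Y
      have hXeq : X ^ r = X := by omega
      have hYeq : Y ^ r = Y := by omega
      have hXone : X = 1 := by
        by_contra h
        have h2 : 2 ≤ X := by omega
        have h3 : X ^ 2 ≤ X ^ r := Nat.pow_le_pow_right (by omega) (by omega)
        have h4 : X * X ≤ X := by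
          calc X * X = X ^ 2 := (sq X).symm
            _ ≤ X ^ r := h3
            _ = X := hXeq
        have h5 : 2 * X ≤ X * X := Nat.mul_le_mul_right X h2
        have := le_trans h5 h4
        omega
      have hYone : Y = 1 := by
        by_contra h
        have h2 : 2 ≤ Y := by omega
        have h3 : Y ^ 2 ≤ Y ^ r := Nat.pow_le_pow_right (by omega) (by omega)
        have h4 : Y * Y ≤ Y := by
          calc Y * Y = Y ^ 2 := (sq Y).symm
            _ ≤ Y ^ r := h3
            _ = Y := hYeq
        have h5 : 2 * Y ≤ Y * Y := Nat.mul_le_mul_right Y h2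
        have := le_trans h5 h4
        omega
      -- then 2 = p ^ M with M ≥ 4
      rw [hXone, hYone, one_pow] at heq'
      have h16 : 2 ^ 4 ≤ 2 ^ M := Nat.pow_le_pow_right (by omega) (by omega)
      have h17 : 2 ^ M ≤ p ^ M := Nat.pow_le_pow_left hp.two_le M
      omega
  · -- n is a power of 2, use FLT4
    push_neg at hodd
    have hneven : n % 2 = 0 := by
      by_contra h
      have h1 : n ≠ 1 := by omega
      have hmf := Nat.minFac_prime h1
      have hmfd := Nat.minFac_dvd n
      have h2 : n.minFac ≠ 2 := by
        intro h2
        rw [h2] at hmfd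
        omega
      exact h2 (hodd n.minFac hmf hmfd)
    obtain ⟨m, hm⟩ : ∃ m, n = 2 * m := ⟨n / 2, by omega⟩
    have hm1 : 1 ≤ m := by omega
    apply fermatLastTheoremFour (x ^ m) (y ^ m) ((p ^ s) ^ m)
      (pow_ne_zero _ hx.ne') (pow_ne_zero _ hy.ne')
      (pow_ne_zero _ (pow_ne_zero _ hp.pos.ne'))
    rw [← pow_mul, ← pow_mul, ← pow_mul]
    have h4 : m * 4 = 2 * n := by omega
    rw [h4]
    exact heq

private lemma lemA (n p : ℕ) (hn : 2 ≤ n) (hp : p.Prime) :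
    ∀ s x y : ℕ, 0 < x → 0 < y → x ^ (2 * n) + y ^ (2 * n) ≠ (p ^ s) ^ (2 * n) := by
  intro s
  induction s with
  | zero =>
    intro x y hx hy h
    have h1 : 1 ≤ x ^ (2 * n) := Nat.one_le_iff_ne_zero.mpr (pow_ne_zero _ hx.ne')
    have h2 : 1 ≤ y ^ (2 * n) := Nat.one_le_iff_ne_zero.mpr (pow_ne_zero _ hy.ne')
    rw [pow_zero, one_pow] at h
    omega
  | succ s ih =>
    intro x y hx hy h
    have hpR : p ∣ (p ^ (s + 1)) ^ (2 * n) :=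
      dvd_pow (dvd_pow_self p (Nat.succ_ne_zero s)) (by omega)
    by_cases hpx : p ∣ x
    · have hpy : p ∣ y := by
        apply hp.dvd_of_dvd_pow (n := 2 * n)
        have h1 : p ∣ x ^ (2 * n) := dvd_pow hpx (by omega)
        have h2 : y ^ (2 * n) = (p ^ (s + 1)) ^ (2 * n) - x ^ (2 * n) := by omega
        rw [h2]
        exact Nat.dvd_sub hpR h1
      obtain ⟨a, rfl⟩ := hpx
      obtain ⟨b, rfl⟩ := hpy
      have ha : 0 < a := Nat.pos_of_ne_zero (by rintro rfl; simp at hx)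
      have hb : 0 < b := Nat.pos_of_ne_zero (by rintro rfl; simp at hy)
      apply ih a b ha hb
      have hq0 : 0 < p ^ (2 * n) := pow_pos hp.pos _
      apply Nat.eq_of_mul_eq_mul_left hq0
      calc p ^ (2 * n) * (a ^ (2 * n) + b ^ (2 * n))
          = (p * a) ^ (2 * n) + (p * b) ^ (2 * n) := by rw [mul_add, mul_pow, mul_pow]
        _ = (p ^ (s + 1)) ^ (2 * n) := h
        _ = p ^ (2 * n) * (p ^ s) ^ (2 * n) := by
            rw [← mul_pow, ← pow_succ']
    · by_cases hpy : p ∣ y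
      · -- then p ∣ x too, contradiction
        apply hpx
        apply hp.dvd_of_dvd_pow (n := 2 * n)
        have h1 : p ∣ y ^ (2 * n) := dvd_pow hpy (by omega)
        have h2 : x ^ (2 * n) = (p ^ (s + 1)) ^ (2 * n) - y ^ (2 * n) := by omega
        rw [h2]
        exact Nat.dvd_sub hpR h1
      · exact core n p (s + 1) x y hn hp (by omega) hx hy hpx hpy h

private lemma mainlem (n p : ℕ) (hn : 2 ≤ n) (hp : p.Prime) :
    ∀ d : ℕ, 1 ≤ d → ∀ s : ℕ,
      (∀ q : ℕ, q.Prime → q ∣ d → ∃ k : ℕ, 1 ≤ k ∧ 3 ≤ q ^ k ∧ Nat.totient (q ^ k) ∣ 2 * n) →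
      ¬ ∃ x₁ x₂ : ℕ, 0 < x₁ ∧ 0 < x₂ ∧
        x₁ ^ (2 * n) + x₂ ^ (2 * n) = (p ^ s * d) ^ (2 * n) := by
  intro d
  induction d using Nat.strong_induction_on with
  | _ d ih =>
    rintro hd s hphi ⟨x, y, hx, hy, heq⟩
    by_cases hd1 : d = 1
    · subst hd1
      rw [mul_one] at heq
      exact lemA n p hn hp s x y hx hy heq
    · set q := d.minFac with hqdef
      have hq : q.Prime := Nat.minFac_prime hd1
      have hqd : q ∣ d := Nat.minFac_dvd d
      obtain ⟨k, hk1, hk3, hkdvd⟩ := hphi q hq hqd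
      have hk2n : k ≤ 2 * n := by
        have h1 : q ^ (k - 1) ∣ (q ^ k).totient := by
          rw [Nat.totient_prime_pow hq (by omega)]
          exact dvd_mul_right _ _
        have h2 : q ^ (k - 1) ≤ 2 * n := Nat.le_of_dvd (by omega) (h1.trans hkdvd)
        have h3 : k - 1 < 2 ^ (k - 1) := Nat.lt_two_pow_self
        have h4 : 2 ^ (k - 1) ≤ q ^ (k - 1) := Nat.pow_le_pow_left hq.two_le _
        omega
      have euler : ∀ z : ℕ, ¬ q ∣ z → z ^ (2 * n) ≡ 1 [MOD q ^ k] := by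
        intro z hz
        have hco : Nat.Coprime z (q ^ k) :=
          Nat.Coprime.pow_right k ((hq.coprime_iff_not_dvd.mpr hz).symm)
        obtain ⟨t, ht⟩ := hkdvd
        calc z ^ (2 * n) = (z ^ (q ^ k).totient) ^ t := by rw [← pow_mul, ← ht]
          _ ≡ 1 ^ t [MOD q ^ k] := (Nat.ModEq.pow_totient hco).pow t
          _ = 1 := one_pow t
      have hdiv : ∀ z : ℕ, q ∣ z → z ^ (2 * n) ≡ 0 [MOD q ^ k] := by
        intro z hz
        have h1 : q ^ k ∣ z ^ (2 * n) :=
          (pow_dvd_pow q hk2n).trans (pow_dvd_pow_of_dvd hz _)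
        exact (Nat.modEq_zero_iff_dvd).mpr h1
      have hR : (p ^ s * d) ^ (2 * n) ≡ 0 [MOD q ^ k] := hdiv _ (hqd.mul_left _)
      have hcontra : ∀ c : ℕ, 1 ≤ c → c ≤ 2 → c ≡ 0 [MOD q ^ k] → False := by
        intro c hc1 hc2 hc
        have h1 : q ^ k ∣ c := (Nat.modEq_zero_iff_dvd).mp hc
        have h2 : q ^ k ≤ c := Nat.le_of_dvd (by omega) h1
        omega
      have hboth : q ∣ x ∧ q ∣ y := by
        rcases em (q ∣ x) with hqx | hqx <;> rcases em (q ∣ y) with hqy | hqy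
        · exact ⟨hqx, hqy⟩
        · exfalso
          have h1 := (hdiv x hqx).add (euler y hqy)
          rw [heq] at h1
          exact hcontra 1 (by omega) (by omega) ((h1.symm.trans hR).symm.symm)
        · exfalso
          have h1 := (euler x hqx).add (hdiv y hqy)
          rw [heq] at h1
          exact hcontra 1 (by omega) (by omega) (h1.symm.trans hR)
        · exfalso
          have h1 := (euler x hqx).add (euler y hqy)
          rw [heq] at h1
          exact hcontra 2 (by omega) (by omega) (h1.symm.trans hR)
      obtain ⟨hqx, hqy⟩ := hboth
      obtain ⟨a, rfl⟩ := hqx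
      obtain ⟨b, rfl⟩ := hqy
      obtain ⟨d', hd'⟩ := hqd
      have ha : 0 < a := Nat.pos_of_ne_zero (by rintro rfl; simp at hx)
      have hb : 0 < b := Nat.pos_of_ne_zero (by rintro rfl; simp at hy)
      have hd'1 : 1 ≤ d' := Nat.pos_of_ne_zero (by rintro rfl; rw [mul_zero] at hd'; omega)
      have hlt : d' < d := by
        rw [hd']
        have := hq.two_le
        calc d' = 1 * d' := (one_mul d').symm
          _ < q * d' := (Nat.mul_lt_mul_right hd'1).mpr (by omega)
      apply ih d' hlt hd'1 s (fun q' hq' hq'd => hphi q' hq' (hd' ▸ hq'd.mul_left q))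
      refine ⟨a, b, ha, hb, ?_⟩
      have hq0 : 0 < q ^ (2 * n) := pow_pos hq.pos _
      apply Nat.eq_of_mul_eq_mul_left hq0
      calc q ^ (2 * n) * (a ^ (2 * n) + b ^ (2 * n))
          = (q * a) ^ (2 * n) + (q * b) ^ (2 * n) := by rw [mul_add, mul_pow, mul_pow]
        _ = (p ^ s * d) ^ (2 * n) := heq
        _ = q ^ (2 * n) * (p ^ s * d') ^ (2 * n) := by
            rw [hd', ← mul_pow]
            ring_nf

/-- For `n ≥ 2`, any prime `p`, any nonnegative `s`, and any `d ≥ 1` such that every prime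
`q ∣ d` admits `k ≥ 1` with `q^k ≥ 3` and `φ(q^k) ∣ 2n`, the equation
`x₁^(2n) + x₂^(2n) = (p^s·d)^(2n)` has no solution in positive integers; in particular
`x₁^(2n) + x₂^(2n) = (2^(s₁)·3^(s₂)·p^s)^(2n)` has no solution in positive integers. -/
theorem stmt_19 (n p s d : ℕ) (hn : 2 ≤ n) (hp : p.Prime) (hd : 1 ≤ d)
    (hφ : ∀ q : ℕ, q.Prime → q ∣ d →
      ∃ k : ℕ, 1 ≤ k ∧ 3 ≤ q ^ k ∧ Nat.totient (q ^ k) ∣ 2 * n) :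
    (¬ ∃ x₁ x₂ : ℕ, 0 < x₁ ∧ 0 < x₂ ∧
        x₁ ^ (2 * n) + x₂ ^ (2 * n) = (p ^ s * d) ^ (2 * n)) ∧
    (∀ s₁ s₂ : ℕ, ¬ ∃ x₁ x₂ : ℕ, 0 < x₁ ∧ 0 < x₂ ∧
        x₁ ^ (2 * n) + x₂ ^ (2 * n) = (2 ^ s₁ * 3 ^ s₂ * p ^ s) ^ (2 * n)) := by
  constructor
  · exact mainlem n p hn hp d hd s hφ
  · intro s₁ s₂
    have h1 : 1 ≤ 2 ^ s₁ * 3 ^ s₂ := Nat.one_le_iff_ne_zero.mpr (by positivity)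
    have h2 : ∀ q : ℕ, q.Prime → q ∣ 2 ^ s₁ * 3 ^ s₂ →
        ∃ k : ℕ, 1 ≤ k ∧ 3 ≤ q ^ k ∧ Nat.totient (q ^ k) ∣ 2 * n := by
      intro q hq hqd
      rcases (Nat.Prime.dvd_mul hq).mp hqd with h | h
      · have hq2 : q = 2 :=
          (Nat.prime_dvd_prime_iff_eq hq Nat.prime_two).mp (hq.dvd_of_dvd_pow h)
        subst hq2
        refine ⟨2, by omega, by norm_num, ?_⟩
        have ht : Nat.totient (2 ^ 2) = 2 := by decide
        rw [ht]
        exact Dvd.intro n rfl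
      · have hq3 : q = 3 :=
          (Nat.prime_dvd_prime_iff_eq hq (by norm_num)).mp (hq.dvd_of_dvd_pow h)
        subst hq3
        refine ⟨1, by omega, by norm_num, ?_⟩
        have ht : Nat.totient (3 ^ 1) = 2 := by decide
        rw [ht]
        exact Dvd.intro n rfl
    rintro ⟨x₁, x₂, hx1, hx2, heq⟩
    apply mainlem n p hn hp (2 ^ s₁ * 3 ^ s₂) h1 s h2
    refine ⟨x₁, x₂, hx1, hx2, ?_⟩
    rw [heq]
    ring_nf
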